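/- The Green kernel G(x,y) = f(y)/f(x) if x ≤ y and 0 otherwise satisfies: for all x, y ∈ M, Σ_{c clique} (-1)^{|c|} f(c) G(x·c, y) = 1 if x = y, and 0 otherwise. In particular G_y = G(·, y) is Möbius harmonic on M \ {y}. -/

import Mathlib

open scoped Classical

/-- A clique of the independence graph `(Σ, I)`. -/
def IsCliq {α : Type*} (I : α → α → Prop) (c : Finset α) : Prop :=
  ∀ a ∈ c, ∀ b ∈ c, a ≠ b → I a b

/-- Cartier–Foata admissibility `c → c'`. -/
def CFadm {α : Type*} (I : α → α → Prop) (c c' : Finset α) : Prop :=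
  ∀ b ∈ c', ∃ a ∈ c, ¬ I a b

/-- Parallelism of cliques `c ∥ c'`, i.e. `c × c' ⊆ I`. -/
def Par {α : Type*} (I : α → α → Prop) (c c' : Finset α) : Prop :=
  ∀ a ∈ c, ∀ b ∈ c', I a b

/-- The commutation relation `ab = ba` for `(a,b) ∈ I`, generating the trace
monoid congruence on the free monoid. -/
def traceRel {α : Type*} (I : α → α → Prop) : FreeMonoid α → FreeMonoid α → Prop :=
  fun x y => ∃ a b, I a b ∧ x = FreeMonoid.of a * FreeMonoid.of b ∧
    y = FreeMonoid.of b * FreeMonoid.of a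

/-- The trace monoid `M(Σ, I) = Σ* / R`. -/
abbrev TM {α : Type*} (I : α → α → Prop) := Con.Quotient (conGen (traceRel I))

/-- Canonical projection from the free monoid onto the trace monoid. -/
def mkTM {α : Type*} (I : α → α → Prop) : FreeMonoid α →* TM I := Con.mk' _

/-- The image of a letter in the trace monoid. -/
def emb {α : Type*} (I : α → α → Prop) (a : α) : TM I := mkTM I (FreeMonoid.of a)

/-- The trace associated to a clique (product of its letters in some enumeration). -/
noncomputable def ctr {α : Type*} (I : α → α → Prop) (c : Finset α) : TM I :=
  mkTM I ((c.toList.map FreeMonoid.of).prod)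

/-- The prefix (left divisibility) order on traces: `u ≤ v ↔ ∃ w, v = u·w`. -/
def pref {α : Type*} (I : α → α → Prop) (u v : TM I) : Prop := ∃ w, v = u * w

namespace GreenAux
open FreeMonoid

lemma mk_eq_mk {α : Type*} {I : α → α → Prop} {u v : FreeMonoid α} :
    mkTM I u = mkTM I v ↔ ConGen.Rel (traceRel I) u v := Con.eq _

lemma mk_surj {α : Type*} {I : α → α → Prop} (x : TM I) :
    ∃ l : List α, x = mkTM I (ofList l) := by
  obtain ⟨w, hw⟩ := Con.mk'_surjective (c := conGen (traceRel I)) x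
  exact ⟨toList w, hw.symm⟩

lemma prod_map_of {α : Type*} (l : List α) :
    (l.map (FreeMonoid.of (α := α))).prod = ofList l := by
  induction l with
  | nil => rfl
  | cons x t ih => simp [ih, ← ofList_cons]

open FreeMonoid

variable {α : Type*}

noncomputable def filt (a b : α) (l : List α) : List α :=
  l.filter (fun x => decide (x = a ∨ x = b))

lemma filt_cons (a b x : α) (l : List α) :
    filt a b (x :: l) = if (x = a ∨ x = b) then x :: filt a b l else filt a b l := by
  simp only [filt, List.filter_cons, decide_eq_true_eq]

lemma filt_append (a b : α) (l l' : List α) :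
    filt a b (l ++ l') = filt a b l ++ filt a b l' := by
  simp [filt, List.filter_append]

lemma mem_filt {a b x : α} {l : List α} : x ∈ filt a b l ↔ x ∈ l ∧ (x = a ∨ x = b) := by
  simp [filt, List.mem_filter]

variable {I : α → α → Prop} (hsymm : ∀ a b, I a b → I b a) (hirr : ∀ a, ¬ I a a)

include hsymm hirr in
lemma filt_eq_of_rel {a b : α} (hab : ¬ I a b) {u v : FreeMonoid α}
    (h : ConGen.Rel (traceRel I) u v) : filt a b (toList u) = filt a b (toList v) := by
  induction h with
  | of x y hxy =>
    obtain ⟨c, d, hcd, rfl, rfl⟩ := hxy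
    have hne : c ≠ d := fun h => hirr c (h ▸ hcd)
    have : ¬ ((c = a ∨ c = b) ∧ (d = a ∨ d = b)) := by
      rintro ⟨hc | hc, hd | hd⟩
      · exact hne (hc.trans hd.symm)
      · exact hab (hc ▸ hd ▸ hcd)
      · exact hab (hc ▸ hd ▸ hsymm _ _ hcd)
      · exact hne (hc.trans hd.symm)
    by_cases h1 : c = a ∨ c = b <;> by_cases h2 : d = a ∨ d = b
    · exact absurd ⟨h1, h2⟩ this
    all_goals simp [toList_mul, toList_of, filt_cons, h1, h2]
  | refl x => rfl
  | symm _ ih => exact ih.symm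
  | trans _ _ ih1 ih2 => exact ih1.trans ih2
  | mul _ _ ih1 ih2 => simp [toList_mul, filt_append, ih1, ih2]

lemma length_eq_of_rel {u v : FreeMonoid α} (h : ConGen.Rel (traceRel I) u v) :
    (toList u).length = (toList v).length := by
  induction h with
  | of x y hxy => obtain ⟨c, d, _, rfl, rfl⟩ := hxy; rfl
  | refl x => rfl
  | symm _ ih => exact ih.symm
  | trans _ _ ih1 ih2 => exact ih1.trans ih2
  | mul _ _ ih1 ih2 => simp [toList_mul, ih1, ih2]

lemma head_filt {c b : α} {p : List α} (hcp : c ∈ p) (hbp : b ∉ p) :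
    ∃ t, filt c b p = c :: t := by
  rcases hfp : filt c b p with _ | ⟨x, t⟩
  · exact absurd (mem_filt.2 ⟨hcp, Or.inl rfl⟩) (by rw [hfp]; simp)
  · have hx : x ∈ filt c b p := by rw [hfp]; exact List.mem_cons_self
    obtain ⟨hxp, hor⟩ := mem_filt.1 hx
    rcases hor with h | h
    · exact ⟨t, by rw [h]⟩
    · exact absurd (h ▸ hxp) hbp

lemma exists_split {a : α} : ∀ {v : List α}, a ∈ v → ∃ p q, v = p ++ a :: q ∧ a ∉ p := by
  intro v
  induction v with
  | nil => intro h; simp at h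
  | cons x t ih =>
    intro hv
    by_cases hxa : x = a
    · exact ⟨[], t, by simp [hxa], by simp⟩
    · have hat : a ∈ t := by
        rcases List.mem_cons.1 hv with h | h
        · exact absurd h.symm hxa
        · exact h
      obtain ⟨p, q, hpq, hap⟩ := ih hat
      refine ⟨x :: p, q, by simp [hpq], ?_⟩
      simp only [List.mem_cons, not_or]
      exact ⟨fun h => hxa h.symm, hap⟩

lemma rel_front (a : α) : ∀ (p : List α) (q : List α), (∀ c ∈ p, I c a) →
    ConGen.Rel (traceRel I) (ofList (p ++ a :: q)) (ofList (a :: (p ++ q))) := by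
  intro p
  induction p with
  | nil => intro q _; exact ConGen.Rel.refl _
  | cons c p' ih =>
    intro q hc
    have h1 : ConGen.Rel (traceRel I) (ofList (c :: (p' ++ a :: q)))
        (ofList (c :: (a :: (p' ++ q)))) := by
      rw [ofList_cons, ofList_cons]
      exact ConGen.Rel.mul (ConGen.Rel.refl _) (ih q (fun x hx => hc x (List.mem_cons_of_mem _ hx)))
    refine ConGen.Rel.trans (by simpa using h1) ?_
    have hsw : ConGen.Rel (traceRel I) (of c * of a) (of a * of c) :=
      ConGen.Rel.of _ _ ⟨c, a, hc c List.mem_cons_self, rfl, rfl⟩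
    have := ConGen.Rel.mul hsw (ConGen.Rel.refl (ofList (p' ++ q)))
    simpa [ofList_cons, mul_assoc] using this

include hsymm hirr in
lemma complete : ∀ (u v : List α),
    (∀ a b : α, ¬ I a b → filt a b u = filt a b v) →
    ConGen.Rel (traceRel I) (ofList u) (ofList v) := by
  intro u
  induction u with
  | nil =>
    intro v h
    rcases v with _ | ⟨x, t⟩
    · exact ConGen.Rel.refl _
    · have := h x x (hirr x)
      simp [filt, filt_cons] at this
  | cons a u' ih =>
    intro v h
    have hav : a ∈ v := by
      have := h a a (hirr a)
      simp only [filt_cons, if_pos (Or.inl rfl)] at this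
      have : a ∈ filt a a v := by rw [← this]; exact List.mem_cons_self
      exact (mem_filt.1 this).1
    obtain ⟨p, q, rfl, hap⟩ := exists_split hav
    -- every letter of p commutes with a (to the right): I c a
    have hpa : ∀ c ∈ p, I c a := by
      intro c hcp
      by_contra hca
      have hcna : c ≠ a := fun h => hap (h ▸ hcp)
      have hh := h c a hca
      rw [filt_cons, if_pos (Or.inr rfl), filt_append, filt_cons, if_pos (Or.inr rfl)] at hh
      obtain ⟨t, ht⟩ := head_filt hcp hap
      rw [ht] at hh
      exact hcna (List.cons_eq_cons.1 hh).1.symm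
    have hrel2 : ConGen.Rel (traceRel I) (ofList (p ++ a :: q)) (ofList (a :: (p ++ q))) :=
      rel_front a p q hpa
    -- cancel the a in front
    have hproj : ∀ a' b' : α, ¬ I a' b' → filt a' b' u' = filt a' b' (p ++ q) := by
      intro a' b' hab
      have h1 := h a' b' hab
      have h2 : filt a' b' (p ++ a :: q) = filt a' b' (a :: (p ++ q)) :=
        filt_eq_of_rel hsymm hirr hab hrel2
      rw [h2] at h1
      rw [filt_cons, filt_cons] at h1
      by_cases hk : a = a' ∨ a = b'
      · rw [if_pos hk, if_pos hk] at h1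
        exact (List.cons_eq_cons.1 h1).2
      · rwa [if_neg hk, if_neg hk] at h1
    have hu' := ih (p ++ q) hproj
    have : ConGen.Rel (traceRel I) (ofList (a :: u')) (ofList (a :: (p ++ q))) := by
      rw [ofList_cons, ofList_cons]
      exact ConGen.Rel.mul (ConGen.Rel.refl _) hu'
    exact this.trans hrel2.symm


lemma mk_cons (a : α) (l : List α) :
    mkTM I (ofList (a :: l)) = emb I a * mkTM I (ofList l) := by
  rw [ofList_cons, map_mul]; rfl

lemma mk_append (l l' : List α) :
    mkTM I (ofList (l ++ l')) = mkTM I (ofList l) * mkTM I (ofList l') := by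
  rw [ofList_append, map_mul]

include hsymm hirr in
lemma mk_list_eq_iff {u v : List α} :
    mkTM I (ofList u) = mkTM I (ofList v) ↔ ∀ a b, ¬ I a b → filt a b u = filt a b v := by
  constructor
  · intro h a b hab
    simpa [toList_ofList] using filt_eq_of_rel hsymm hirr hab (mk_eq_mk.1 h)
  · intro h
    exact mk_eq_mk.2 (complete hsymm hirr u v h)

include hsymm hirr in
lemma mul_left_cancel_tm {x u v : TM I} (h : x * u = x * v) : u = v := by
  obtain ⟨lx, rfl⟩ := mk_surj x
  obtain ⟨lu, rfl⟩ := mk_surj u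
  obtain ⟨lv, rfl⟩ := mk_surj v
  rw [← mk_append, ← mk_append] at h
  apply (mk_list_eq_iff hsymm hirr).2
  intro a b hab
  have := (mk_list_eq_iff hsymm hirr).1 h a b hab
  rw [filt_append, filt_append] at this
  exact List.append_cancel_left this

include hsymm hirr in
lemma pair_lemma {a b : α} (hne : a ≠ b) {u v : TM I} (h : emb I a * u = emb I b * v) :
    I a b ∧ ∃ w, u = emb I b * w := by
  obtain ⟨lu, rfl⟩ := mk_surj u
  obtain ⟨lv, rfl⟩ := mk_surj v
  rw [← mk_cons, ← mk_cons] at h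
  have H := (mk_list_eq_iff hsymm hirr).1 h
  have hIab : I a b := by
    by_contra hab
    have := H a b hab
    rw [filt_cons, filt_cons, if_pos (Or.inl rfl), if_pos (Or.inr rfl)] at this
    exact hne (List.cons_eq_cons.1 this).1
  refine ⟨hIab, ?_⟩
  have hblu : b ∈ lu := by
    have hbb := H b b (hirr b)
    rw [filt_cons, filt_cons, if_neg (by simp [hne]), if_pos (Or.inl rfl)] at hbb
    have : b ∈ filt b b lu := by rw [hbb]; exact List.mem_cons_self
    exact (mem_filt.1 this).1
  obtain ⟨p, q, rfl, hbp⟩ := exists_split hblu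
  have hcb : ∀ c ∈ p, I c b := by
    intro c hcp
    by_contra hcbI
    have hcnb : c ≠ b := fun h' => hbp (h' ▸ hcp)
    have hh := H c b hcbI
    by_cases hac : a = c
    · rw [filt_cons, filt_cons, if_pos (Or.inl hac), if_pos (Or.inr rfl)] at hh
      exact hne (List.cons_eq_cons.1 hh).1
    · rw [filt_cons, filt_cons, if_neg (by simp [hac, hne]),
        if_pos (Or.inr rfl), filt_append, filt_cons, if_pos (Or.inr rfl)] at hh
      obtain ⟨t, ht⟩ := head_filt hcp hbp
      rw [ht] at hh
      exact hcnb (List.cons_eq_cons.1 hh).1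
  refine ⟨mkTM I (ofList (p ++ q)), ?_⟩
  have := mk_eq_mk.2 (rel_front (I := I) b p q hcb)
  rw [this, mk_cons]

include hsymm hirr in
lemma step2 (x y : TM I) {a b : α} (hne : a ≠ b) (ha : pref I (x * emb I a) y)
    (hb : pref I (x * emb I b) y) : I a b ∧ pref I (x * emb I a * emb I b) y := by
  obtain ⟨u, hu⟩ := ha
  obtain ⟨v, hv⟩ := hb
  have h : x * (emb I a * u) = x * (emb I b * v) := by
    rw [← mul_assoc, ← mul_assoc, ← hu, ← hv]
  obtain ⟨hIab, w, hw⟩ := pair_lemma hsymm hirr hne (mul_left_cancel_tm hsymm hirr h)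
  exact ⟨hIab, ⟨w, by rw [hu, hw]; simp [mul_assoc]⟩⟩

lemma rel_of_perm : ∀ {l l' : List α}, l.Perm l' →
    (∀ x ∈ l, ∀ y ∈ l, x ≠ y → I x y) →
    ConGen.Rel (traceRel I) (ofList l) (ofList l') := by
  intro l l' hp
  induction hp with
  | nil => intro _; exact ConGen.Rel.refl _
  | cons x h ih =>
    intro hcomm
    rw [ofList_cons, ofList_cons]
    exact ConGen.Rel.mul (ConGen.Rel.refl _)
      (ih fun u hu v hv huv => hcomm u (List.mem_cons_of_mem _ hu) v (List.mem_cons_of_mem _ hv) huv)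
  | swap x y l =>
    intro hcomm
    by_cases hxy : y = x
    · rw [hxy]; exact ConGen.Rel.refl _
    · have hI : I y x := hcomm y (by simp) x (by simp) hxy
      have hsw : ConGen.Rel (traceRel I) (of y * of x) (of x * of y) :=
        ConGen.Rel.of _ _ ⟨y, x, hI, rfl, rfl⟩
      have := ConGen.Rel.mul hsw (ConGen.Rel.refl (ofList l))
      simpa [ofList_cons, mul_assoc] using this
  | trans h1 _ ih1 ih2 =>
    intro hcomm
    refine (ih1 hcomm).trans (ih2 ?_)
    intro u hu v hv huv
    exact hcomm u (h1.mem_iff.2 hu) v (h1.mem_iff.2 hv) huv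

lemma ctr_eq (c : Finset α) : ctr I c = mkTM I (ofList c.toList) := by
  rw [ctr, prod_map_of]

lemma ctr_empty : ctr I (∅ : Finset α) = 1 := by
  rw [ctr_eq]
  simp only [Finset.toList_empty]
  exact map_one _

lemma ctr_erase {c : Finset α} {a : α} (ha : a ∈ c)
    (hcl : ∀ x ∈ c, ∀ y ∈ c, x ≠ y → I x y) :
    ctr I c = emb I a * ctr I (c.erase a) := by
  rw [ctr_eq, ctr_eq, ← mk_cons]
  apply mk_eq_mk.2
  apply rel_of_perm
  · apply (List.perm_ext_iff_of_nodup (Finset.nodup_toList c) ?_).2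
    · intro b
      simp only [Finset.mem_toList, List.mem_cons, Finset.mem_erase]
      by_cases hba : b = a
      · simp [hba, ha]
      · simp [hba]
    · refine List.Nodup.cons ?_ (Finset.nodup_toList _)
      simp [Finset.mem_toList]
  · intro u hu v hv huv
    exact hcl u (Finset.mem_toList.1 hu) v (Finset.mem_toList.1 hv) huv

include hsymm hirr in
lemma build (y : TM I) : ∀ (c : Finset α) (x : TM I), pref I x y →
    (∀ a ∈ c, pref I (x * emb I a) y) → pref I (x * ctr I c) y := by
  intro c
  induction c using Finset.induction_on with
  | empty => intro x hx _; rwa [ctr_empty, mul_one]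
  | @insert a s has ih =>
    intro x _ h
    have hcl : ∀ u ∈ insert a s, ∀ v ∈ insert a s, u ≠ v → I u v := fun u hu v hv huv =>
      (step2 hsymm hirr x y huv (h u hu) (h v hv)).1
    have hctr : ctr I (insert a s) = emb I a * ctr I s := by
      rw [ctr_erase (Finset.mem_insert_self a s) hcl, Finset.erase_insert has]
    rw [hctr, ← mul_assoc]
    apply ih (x * emb I a) (h a (Finset.mem_insert_self a s))
    intro b hb
    have hab : a ≠ b := fun h' => has (h' ▸ hb)
    exact (step2 hsymm hirr x y hab (h a (Finset.mem_insert_self a s))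
      (h b (Finset.mem_insert_of_mem hb))).2

lemma no_step_self (x : TM I) (a : α) : ¬ pref I (x * emb I a) x := by
  rintro ⟨w, hw⟩
  obtain ⟨lx, rfl⟩ := mk_surj x
  obtain ⟨lw, rfl⟩ := mk_surj w
  have h2 : mkTM I (ofList lx) = mkTM I (ofList (lx ++ a :: lw)) := by
    rw [mk_append, mk_cons, ← mul_assoc]; exact hw
  have := length_eq_of_rel (mk_eq_mk.1 h2)
  simp [toList_ofList] at this

lemma first_letter {x y : TM I} (hxy : pref I x y) (hne : x ≠ y) :
    ∃ a, pref I (x * emb I a) y := by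
  obtain ⟨u, hu⟩ := hxy
  obtain ⟨lu, rfl⟩ := mk_surj u
  rcases lu with _ | ⟨a, t⟩
  · refine absurd ?_ hne
    have h1 : mkTM I (ofList ([] : List α)) = 1 := map_one _
    rw [h1, mul_one] at hu
    exact hu.symm
  · exact ⟨a, ⟨mkTM I (ofList t), by rw [hu, mk_cons, ← mul_assoc]⟩⟩

end GreenAux

/-- The Green kernel `G(x,y) = f(y)/f(x)` if `x ≤ y` (else 0) satisfies
`ΔG_y(x) = 1` if `x = y` and `0` otherwise; in particular `G_y` is Möbius
harmonic on `M \ {y}`. -/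
theorem green_kernel_laplacian {α : Type*} [Fintype α] (I : α → α → Prop)
    (hsymm : ∀ a b, I a b → I b a) (hirr : ∀ a, ¬ I a a)
    (f : TM I → ℝ) (hfpos : ∀ u, 0 < f u)
    (hfmul : ∀ u v : TM I, f (u * v) = f u * f v)
    (hmob : (∑ c : Finset α, if IsCliq I c then (-1 : ℝ) ^ c.card * f (ctr I c) else 0) = 0)
    (G : TM I → TM I → ℝ)
    (hG : ∀ x y : TM I, G x y = if pref I x y then f y / f x else 0) :
    ∀ x y : TM I,
      (∑ c : Finset α,
        if IsCliq I c then (-1 : ℝ) ^ c.card * f (ctr I c) * G (x * ctr I c) y else 0) =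
      if x = y then 1 else 0 := by
  intro x y
  set m : Finset α := Finset.univ.filter (fun a => pref I (x * emb I a) y) with hm
  have hmem : ∀ a, a ∈ m ↔ pref I (x * emb I a) y := by
    intro a; simp [hm]
  by_cases hxy : pref I x y
  · -- x ≤ y
    have hchar : ∀ c : Finset α, (IsCliq I c ∧ pref I (x * ctr I c) y) ↔ c ⊆ m := by
      intro c
      constructor
      · rintro ⟨hcl, w, hw⟩ a hac
        rw [hmem]
        have hdec := GreenAux.ctr_erase (I := I) hac hcl
        exact ⟨ctr I (c.erase a) * w, by rw [hw, hdec]; simp [mul_assoc]⟩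
      · intro hcm
        have hcl : IsCliq I c := fun a ha b hb hab =>
          (GreenAux.step2 hsymm hirr x y hab ((hmem a).1 (hcm ha)) ((hmem b).1 (hcm hb))).1
        exact ⟨hcl, GreenAux.build hsymm hirr y c x hxy (fun a ha => (hmem a).1 (hcm ha))⟩
    have hsummand : ∀ c : Finset α,
        (if IsCliq I c then (-1:ℝ)^c.card * f (ctr I c) * G (x * ctr I c) y else 0) =
        (f y / f x) * (if c ⊆ m then (-1:ℝ)^c.card else 0) := by
      intro c
      by_cases hsub : c ⊆ m
      · obtain ⟨hcl, hpref⟩ := (hchar c).2 hsub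
        rw [if_pos hcl, if_pos hsub, hG, if_pos hpref, hfmul]
        have h1 := (hfpos x).ne'
        have h2 := (hfpos (ctr I c)).ne'
        field_simp
      · by_cases hcl : IsCliq I c
        · have hnp : ¬ pref I (x * ctr I c) y := fun hp => hsub ((hchar c).1 ⟨hcl, hp⟩)
          rw [if_pos hcl, if_neg hsub, hG, if_neg hnp, mul_zero, mul_zero]
        · rw [if_neg hcl, if_neg hsub, mul_zero]
    rw [Finset.sum_congr rfl (fun c _ => hsummand c), ← Finset.mul_sum]
    have hsum : (∑ c : Finset α, if c ⊆ m then (-1:ℝ)^c.card else 0) =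
        if m = ∅ then 1 else 0 := by
      rw [← Finset.sum_filter]
      have hpow : Finset.univ.filter (fun c : Finset α => c ⊆ m) = m.powerset := by
        ext c; simp [Finset.mem_powerset]
      rw [hpow]
      have hz := Finset.sum_powerset_neg_one_pow_card (x := m)
      calc (∑ c ∈ m.powerset, (-1:ℝ)^c.card)
          = ((∑ c ∈ m.powerset, (-1:ℤ)^c.card : ℤ) : ℝ) := by push_cast; rfl
        _ = if m = ∅ then 1 else 0 := by rw [hz]; split <;> simp
    rw [hsum]
    by_cases hxeqy : x = y
    · have hm0 : m = ∅ := by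
        ext a
        simp only [Finset.notMem_empty, iff_false]
        intro ha
        exact GreenAux.no_step_self x a (hxeqy ▸ (hmem a).1 ha)
      rw [if_pos hm0, if_pos hxeqy, mul_one, hxeqy, div_self (hfpos y).ne']
    · have hm0 : m ≠ ∅ := by
        obtain ⟨a, ha⟩ := GreenAux.first_letter hxy hxeqy
        exact fun h0 => (h0 ▸ Finset.notMem_empty a) ((hmem a).2 ha)
      rw [if_neg hm0, if_neg hxeqy, mul_zero]
  · -- ¬ x ≤ y
    have hxny : x ≠ y := fun h => hxy ⟨1, by rw [h, mul_one]⟩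
    rw [if_neg hxny]
    apply Finset.sum_eq_zero
    intro c _
    by_cases hcl : IsCliq I c
    · have hnp : ¬ pref I (x * ctr I c) y := by
        rintro ⟨w, hw⟩
        exact hxy ⟨ctr I c * w, by rw [hw, mul_assoc]⟩
      rw [if_pos hcl, hG, if_neg hnp, mul_zero]
    · rw [if_neg hcl]
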